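/- Let p, q > N-1 be real, 2 ≤ k ≤ N, and let x(t) solve dx_i/dt = (p-q) - (p+q)x_i + 2∑_{j≠i}(1 - x_i x_j)/(x_i - x_j) with pairwise distinct coordinates. Then d/dt e_k^N(x(t)) = k(-(p+q)+k-1)·e_k^N(x(t)) + (N-k+1)(p-q)·e_{k-1}^N(x(t)) - (N-k+2)(N-k+1)·e_{k-2}^N(x(t)). -/

import Mathlib

open Finset

/-- The elementary symmetric polynomial of degree `k` in the variables indexed by `S`. -/
noncomputable def esym {N : ℕ} (k : ℕ) (S : Finset (Fin N)) (x : Fin N → ℝ) : ℝ :=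
  ∑ s ∈ Finset.powersetCard k S, ∏ i ∈ s, x i

namespace EsymAux

variable {N : ℕ}

lemma esym_rec (m : ℕ) (T : Finset (Fin N)) (x : Fin N → ℝ) {i : Fin N} (hi : i ∈ T) :
    esym (m+1) T x = esym (m+1) (T.erase i) x + x i * esym m (T.erase i) x := by
  have h2 : i ∉ T.erase i := Finset.notMem_erase i T
  unfold esym
  conv_lhs => rw [← Finset.insert_erase hi]
  rw [Finset.powersetCard_succ_insert h2, Finset.sum_union]
  · congr 1
    rw [Finset.sum_image (fun s hs s' hs' h => by
      have hs1 : i ∉ s := fun hh =>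
        h2 ((Finset.mem_powersetCard.mp hs).1 hh)
      have hs2 : i ∉ s' := fun hh =>
        h2 ((Finset.mem_powersetCard.mp hs').1 hh)
      rw [← Finset.erase_insert hs1, ← Finset.erase_insert hs2, h]), Finset.mul_sum]
    refine Finset.sum_congr rfl fun s hs => ?_
    have his : i ∉ s := fun hh => h2 ((Finset.mem_powersetCard.mp hs).1 hh)
    rw [Finset.prod_insert his]
  · rw [Finset.disjoint_left]
    intro t ht1 ht2
    have : i ∉ t := fun hh => h2 ((Finset.mem_powersetCard.mp ht1).1 hh)
    obtain ⟨s, _, rfl⟩ := Finset.mem_image.mp ht2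
    exact this (Finset.mem_insert_self i s)

lemma sum_pairs (k : ℕ) (T : Finset (Fin N)) (x f : Fin N → ℝ) :
    ∑ t ∈ Finset.powersetCard (k+1) T, ∑ i ∈ t, (∏ j ∈ t.erase i, x j) * f i
      = ∑ i ∈ T, f i * esym k (T.erase i) x := by
  rw [Finset.sum_comm' (t' := T)
    (s' := fun i => (Finset.powersetCard (k+1) T).filter (fun t => i ∈ t))
    (fun t i => by
      simp only [Finset.mem_filter, Finset.mem_powersetCard]
      constructor
      · rintro ⟨⟨h1, h2⟩, hi⟩; exact ⟨⟨⟨h1, h2⟩, hi⟩, h1 hi⟩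
      · rintro ⟨⟨h1, hi⟩, _⟩; exact ⟨h1, hi⟩)]
  refine Finset.sum_congr rfl fun i hi => ?_
  rw [mul_comm, esym, Finset.sum_mul]
  refine Finset.sum_bij' (fun t _ => t.erase i) (fun s _ => insert i s) ?_ ?_ ?_ ?_ ?_
  · intro t ht
    simp only [Finset.mem_filter, Finset.mem_powersetCard] at ht ⊢
    obtain ⟨⟨h1, h2⟩, hit⟩ := ht
    refine ⟨Finset.erase_subset_erase i h1, ?_⟩
    rw [Finset.card_erase_of_mem hit, h2]; omega
  · intro s hs
    simp only [Finset.mem_filter, Finset.mem_powersetCard] at hs ⊢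
    obtain ⟨h1, h2⟩ := hs
    have his : i ∉ s := fun hh => (Finset.notMem_erase i T) (h1 hh)
    refine ⟨⟨?_, ?_⟩, Finset.mem_insert_self i s⟩
    · intro a ha
      rcases Finset.mem_insert.mp ha with rfl | ha
      · exact hi
      · exact (Finset.erase_subset i T) (h1 ha)
    · rw [Finset.card_insert_of_notMem his, h2]
  · intro t ht
    simp only [Finset.mem_filter] at ht
    exact Finset.insert_erase ht.2
  · intro s hs
    simp only [Finset.mem_powersetCard] at hs
    have his : i ∉ s := fun hh => (Finset.notMem_erase i T) (hs.1 hh)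
    exact Finset.erase_insert his
  · intro t _
    rfl

lemma sum_mul_esym_erase (m : ℕ) (T : Finset (Fin N)) (x : Fin N → ℝ) :
    ∑ i ∈ T, x i * esym m (T.erase i) x = ((m : ℝ) + 1) * esym (m+1) T x := by
  rw [← sum_pairs m T x x]
  rw [esym, Finset.mul_sum]
  refine Finset.sum_congr rfl fun t ht => ?_
  have hcard : t.card = m + 1 := (Finset.mem_powersetCard.mp ht).2
  calc ∑ i ∈ t, (∏ j ∈ t.erase i, x j) * x i
      = ∑ i ∈ t, ∏ j ∈ t, x j := by
        refine Finset.sum_congr rfl fun i hi => Finset.prod_erase_mul t x hi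
    _ = (t.card : ℝ) * ∏ j ∈ t, x j := by rw [Finset.sum_const, nsmul_eq_mul]
    _ = ((m : ℝ) + 1) * ∏ j ∈ t, x j := by rw [hcard]; push_cast; ring

lemma sum_esym_erase (m : ℕ) (T : Finset (Fin N)) (x : Fin N → ℝ) :
    ∑ i ∈ T, esym m (T.erase i) x = ((T.card : ℝ) - m) * esym m T x := by
  have key : ∀ i : Fin N, Finset.powersetCard m (T.erase i)
      = (Finset.powersetCard m T).filter (fun s => i ∉ s) := by
    intro i
    ext s
    simp only [Finset.mem_powersetCard, Finset.mem_filter, Finset.subset_erase]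
    tauto
  simp only [esym, key]
  rw [Finset.sum_comm' (t' := Finset.powersetCard m T)
    (s' := fun s => T.filter (fun i => i ∉ s))
    (fun i s => by
      simp only [Finset.mem_filter]
      tauto)]
  rw [Finset.mul_sum]
  refine Finset.sum_congr rfl fun s hs => ?_
  obtain ⟨hsub, hcard⟩ := Finset.mem_powersetCard.mp hs
  rw [Finset.sum_const, nsmul_eq_mul, ← Finset.sdiff_eq_filter,
    Finset.card_sdiff_of_subset hsub, hcard, Nat.cast_sub (hcard ▸ Finset.card_le_card hsub)]

end EsymAux

lemma pair_point (m : ℕ) (x : Fin N → ℝ) {i j : Fin N} (hij : i ≠ j)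
    (hx : x i ≠ x j) :
    (1 - x i * x j) / (x i - x j) * esym (m+1) ((univ : Finset (Fin N)).erase i) x
      + (1 - x j * x i) / (x j - x i) * esym (m+1) ((univ : Finset (Fin N)).erase j) x
    = -((1 - x i * x j) * esym m (((univ : Finset (Fin N)).erase i).erase j) x) := by
  have hji : j ∈ (univ : Finset (Fin N)).erase i := Finset.mem_erase.mpr ⟨hij.symm, Finset.mem_univ j⟩
  have hij' : i ∈ (univ : Finset (Fin N)).erase j := Finset.mem_erase.mpr ⟨hij, Finset.mem_univ i⟩
  have e1 := EsymAux.esym_rec m ((univ : Finset (Fin N)).erase i) x hji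
  have e2 := EsymAux.esym_rec m ((univ : Finset (Fin N)).erase j) x hij'
  have hcomm : ((univ : Finset (Fin N)).erase j).erase i
      = ((univ : Finset (Fin N)).erase i).erase j := Finset.erase_right_comm
  rw [hcomm] at e2
  rw [e1, e2]
  have hsub : x i - x j ≠ 0 := sub_ne_zero.mpr hx
  have hsub' : x j - x i ≠ 0 := fun h => hsub (by linarith [sub_eq_zero.mp h])
  field_simp
  ring

lemma key (m : ℕ) {N : ℕ} (hkN : m + 2 ≤ N) (p q : ℝ) (x : Fin N → ℝ)
    (hx : ∀ i j : Fin N, i ≠ j → x i ≠ x j) :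
    ∑ i ∈ (univ : Finset (Fin N)),
      ((p - q) - (p + q) * x i
        + 2 * ∑ j ∈ (univ : Finset (Fin N)).erase i, (1 - x i * x j) / (x i - x j))
        * esym (m+1) (univ.erase i) x
    = ((m : ℝ) + 2) * (-(p + q) + ((m : ℝ) + 2) - 1) * esym (m+2) univ x
      + ((N : ℝ) - ((m : ℝ) + 2) + 1) * (p - q) * esym (m+1) univ x
      - ((N : ℝ) - ((m : ℝ) + 2) + 2) * ((N : ℝ) - ((m : ℝ) + 2) + 1) * esym m univ x := by
  have hN1 : 1 ≤ N := by omega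
  have hcardU : ((univ : Finset (Fin N)).card : ℝ) = (N : ℝ) := by
    simp [Finset.card_univ]
  have hcardE : ∀ i : Fin N, (((univ : Finset (Fin N)).erase i).card : ℝ) = (N : ℝ) - 1 := by
    intro i
    rw [Finset.card_erase_of_mem (Finset.mem_univ i), Finset.card_univ, Fintype.card_fin,
      Nat.cast_sub hN1, Nat.cast_one]
  -- split the sum
  have expand : ∀ i : Fin N,
      ((p - q) - (p + q) * x i
        + 2 * ∑ j ∈ (univ : Finset (Fin N)).erase i, (1 - x i * x j) / (x i - x j))
        * esym (m+1) (univ.erase i) x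
      = (p - q) * esym (m+1) (univ.erase i) x
        - (p + q) * (x i * esym (m+1) (univ.erase i) x)
        + 2 * ((∑ j ∈ (univ : Finset (Fin N)).erase i, (1 - x i * x j) / (x i - x j))
            * esym (m+1) (univ.erase i) x) := by
    intro i; ring
  simp only [expand]
  rw [Finset.sum_add_distrib, Finset.sum_sub_distrib, ← Finset.mul_sum, ← Finset.mul_sum,
    ← Finset.mul_sum]
  have h1 : ∑ i ∈ (univ : Finset (Fin N)), esym (m+1) (univ.erase i) x
      = ((N : ℝ) - (m+1)) * esym (m+1) univ x := by
    rw [EsymAux.sum_esym_erase, hcardU]; push_cast; ring_nf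
  have h2 : ∑ i ∈ (univ : Finset (Fin N)), x i * esym (m+1) (univ.erase i) x
      = ((m : ℝ) + 2) * esym (m+2) univ x := by
    rw [EsymAux.sum_mul_esym_erase]; push_cast; ring_nf
  -- singular part
  have hswap : ∑ i ∈ (univ : Finset (Fin N)), ∑ j ∈ univ.erase i,
        (1 - x j * x i) / (x j - x i) * esym (m+1) (univ.erase j) x
      = ∑ i ∈ (univ : Finset (Fin N)), ∑ j ∈ univ.erase i,
        (1 - x i * x j) / (x i - x j) * esym (m+1) (univ.erase i) x := by
    rw [Finset.sum_comm' (t' := (univ : Finset (Fin N)))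
      (s' := fun j => (univ : Finset (Fin N)).erase j)
      (fun a b => by
        simp only [Finset.mem_univ, Finset.mem_erase, true_and, and_true]
        exact ne_comm)]
  have h3 : ∑ i ∈ (univ : Finset (Fin N)),
        (∑ j ∈ (univ : Finset (Fin N)).erase i, (1 - x i * x j) / (x i - x j))
          * esym (m+1) (univ.erase i) x
      = (((m : ℝ) + 2) * ((m : ℝ) + 1) * esym (m+2) univ x
          - ((N : ℝ) - 1 - m) * ((N : ℝ) - m) * esym m univ x) / 2 := by
    have twice : 2 * ∑ i ∈ (univ : Finset (Fin N)),
          (∑ j ∈ (univ : Finset (Fin N)).erase i, (1 - x i * x j) / (x i - x j))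
            * esym (m+1) (univ.erase i) x
        = ∑ i ∈ (univ : Finset (Fin N)), ∑ j ∈ (univ : Finset (Fin N)).erase i,
            (-((1 - x i * x j) * esym m (((univ : Finset (Fin N)).erase i).erase j) x)) := by
      have lhs_eq : ∀ i : Fin N,
          (∑ j ∈ (univ : Finset (Fin N)).erase i, (1 - x i * x j) / (x i - x j))
            * esym (m+1) (univ.erase i) x
          = ∑ j ∈ (univ : Finset (Fin N)).erase i,
              (1 - x i * x j) / (x i - x j) * esym (m+1) (univ.erase i) x := by
        intro i; rw [Finset.sum_mul]
      simp only [lhs_eq]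
      rw [two_mul]
      nth_rewrite 2 [← hswap]
      rw [← Finset.sum_add_distrib]
      refine Finset.sum_congr rfl fun i _ => ?_
      rw [← Finset.sum_add_distrib]
      refine Finset.sum_congr rfl fun j hj => ?_
      have hij : i ≠ j := (Finset.mem_erase.mp hj).1.symm
      exact pair_point m x hij (hx i j hij)
    have rhs_eq : ∑ i ∈ (univ : Finset (Fin N)), ∑ j ∈ (univ : Finset (Fin N)).erase i,
          (-((1 - x i * x j) * esym m (((univ : Finset (Fin N)).erase i).erase j) x))
        = ((m : ℝ) + 2) * ((m : ℝ) + 1) * esym (m+2) univ x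
          - ((N : ℝ) - 1 - m) * ((N : ℝ) - m) * esym m univ x := by
      have split : ∀ i j : Fin N,
          (-((1 - x i * x j) * esym m (((univ : Finset (Fin N)).erase i).erase j) x))
          = x i * (x j * esym m (((univ : Finset (Fin N)).erase i).erase j) x)
            - esym m (((univ : Finset (Fin N)).erase i).erase j) x := by
        intro i j; ring
      simp only [split, Finset.sum_sub_distrib]
      have hA : ∑ i ∈ (univ : Finset (Fin N)), ∑ j ∈ (univ : Finset (Fin N)).erase i,
            (x i * (x j * esym m (((univ : Finset (Fin N)).erase i).erase j) x))
          = ((m : ℝ) + 2) * ((m : ℝ) + 1) * esym (m+2) univ x := by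
        have inner : ∀ i : Fin N, ∑ j ∈ (univ : Finset (Fin N)).erase i,
              x i * (x j * esym m (((univ : Finset (Fin N)).erase i).erase j) x)
            = x i * (((m : ℝ) + 1) * esym (m+1) (univ.erase i) x) := by
          intro i
          rw [← Finset.mul_sum, EsymAux.sum_mul_esym_erase]
        simp only [inner]
        have : ∑ i ∈ (univ : Finset (Fin N)),
              x i * (((m : ℝ) + 1) * esym (m+1) (univ.erase i) x)
            = ((m : ℝ) + 1) * ∑ i ∈ (univ : Finset (Fin N)),
                x i * esym (m+1) (univ.erase i) x := by
          rw [Finset.mul_sum]; refine Finset.sum_congr rfl fun i _ => by ring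
        rw [this, EsymAux.sum_mul_esym_erase]
        push_cast; ring
      have hB : ∑ i ∈ (univ : Finset (Fin N)), ∑ j ∈ (univ : Finset (Fin N)).erase i,
            esym m (((univ : Finset (Fin N)).erase i).erase j) x
          = ((N : ℝ) - 1 - m) * ((N : ℝ) - m) * esym m univ x := by
        have inner : ∀ i : Fin N, ∑ j ∈ (univ : Finset (Fin N)).erase i,
              esym m (((univ : Finset (Fin N)).erase i).erase j) x
            = ((N : ℝ) - 1 - m) * esym m (univ.erase i) x := by
          intro i
          rw [EsymAux.sum_esym_erase, hcardE]
        simp only [inner]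
        rw [← Finset.mul_sum, EsymAux.sum_esym_erase, hcardU]
        ring
      rw [hA, hB]
    rw [rhs_eq] at twice
    linarith
  rw [h1, h2, h3]
  push_cast
  ring



theorem stmt5 {N : ℕ} (p q T : ℝ) (hp : (N : ℝ) - 1 < p) (hq : (N : ℝ) - 1 < q)
    (hT : 0 < T) (k : ℕ) (hk2 : 2 ≤ k) (hkN : k ≤ N) (x : ℝ → Fin N → ℝ)
    (hdist : ∀ t ∈ Set.Ico (0 : ℝ) T, ∀ i j : Fin N, i ≠ j → x t i ≠ x t j)
    (hODE : ∀ t ∈ Set.Ico (0 : ℝ) T, ∀ i : Fin N,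
      HasDerivAt (fun s => x s i)
        ((p - q) - (p + q) * x t i
          + 2 * ∑ j ∈ (univ : Finset (Fin N)).erase i,
              (1 - x t i * x t j) / (x t i - x t j)) t) :
    ∀ t ∈ Set.Ico (0 : ℝ) T,
      HasDerivAt (fun s => esym k univ (x s))
        ((k : ℝ) * (-(p + q) + k - 1) * esym k univ (x t)
          + ((N : ℝ) - k + 1) * (p - q) * esym (k - 1) univ (x t)
          - ((N : ℝ) - k + 2) * ((N : ℝ) - k + 1) * esym (k - 2) univ (x t)) t := by
  intro t ht
  obtain ⟨m, rfl⟩ : ∃ m, k = m + 2 := ⟨k - 2, by omega⟩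
  set v : Fin N → ℝ := fun i => (p - q) - (p + q) * x t i
      + 2 * ∑ j ∈ (univ : Finset (Fin N)).erase i,
          (1 - x t i * x t j) / (x t i - x t j) with hv
  have hD : HasDerivAt (fun s => esym (m+2) univ (x s))
      (∑ s ∈ Finset.powersetCard (m+2) (univ : Finset (Fin N)),
        ∑ i ∈ s, (∏ j ∈ s.erase i, x t j) * v i) t := by
    have hprod : ∀ s ∈ Finset.powersetCard (m+2) (univ : Finset (Fin N)),
        HasDerivAt (fun τ => ∏ i ∈ s, x τ i)
          (∑ i ∈ s, (∏ j ∈ s.erase i, x t j) * v i) t := by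
      intro s _
      have h := HasDerivAt.finset_prod (u := s) (f := fun i τ => x τ i)
        (f' := fun i => v i) (x := t) (fun i _ => hODE t ht i)
      simpa [smul_eq_mul, Finset.prod_fn] using h
    have h := HasDerivAt.sum hprod
    simpa [esym, Finset.sum_fn] using h
  have hval : ∑ s ∈ Finset.powersetCard (m+2) (univ : Finset (Fin N)),
        ∑ i ∈ s, (∏ j ∈ s.erase i, x t j) * v i
      = ((m+2 : ℕ) : ℝ) * (-(p + q) + ((m+2 : ℕ) : ℝ) - 1) * esym (m+2) univ (x t)
          + ((N : ℝ) - ((m+2 : ℕ) : ℝ) + 1) * (p - q) * esym (m+2-1) univ (x t)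
          - ((N : ℝ) - ((m+2 : ℕ) : ℝ) + 2) * ((N : ℝ) - ((m+2 : ℕ) : ℝ) + 1)
            * esym (m+2-2) univ (x t) := by
    have h1 := EsymAux.sum_pairs (m+1) (univ : Finset (Fin N)) (x t) v
    rw [show m + 2 = (m+1) + 1 from rfl, h1, hv]
    rw [key m hkN p q (x t) (hdist t ht)]
    have e1 : m + 1 + 1 - 1 = m + 1 := rfl
    have e2 : m + 1 + 1 - 2 = m := rfl
    rw [e1, e2]
    push_cast
    ring
  rw [hval] at hD
  exact hD
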